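/- Let n ≥ 2 and consider real variables W²(1),…,W²(n), W⁶(1),…,W⁶(n), W⁴(2),…,W⁴(n) (in that column order). Form the matrix M of the linear constraint system consisting of: (i) for each j = 2,…,n the row encoding W²(j) − W²(j−1) − W⁴(j) ≤ 0; (ii) for each j = 1,…,n the row encoding W⁶(j) − W²(j) ≤ 0; (iii) for each of the 3n−1 variables the two rows encoding the bound constraints W ≤ 1 and −W ≤ 0 (i.e., the identity matrix and its negation appended as rows). Then M is totally unimodular. -/

import Mathlib

open Matrix in
private lemma det_mem_range_of_single_col {k : ℕ} {S : Matrix (Fin (k+1)) (Fin (k+1)) ℚ}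
    (x y : Fin (k+1)) (s : ℚ) (hs : s = 1 ∨ s = -1) (h1 : S y x = s)
    (h0 : ∀ i, i ≠ y → S i x = 0)
    (hm : (S.submatrix y.succAbove x.succAbove).det ∈
      Set.range (SignType.cast : SignType → ℚ)) :
    S.det ∈ Set.range (SignType.cast : SignType → ℚ) := by
  rw [Matrix.det_succ_column S x, Fintype.sum_eq_single y (fun i hi => by simp [h0 i hi]), h1]
  change _ ∈ MonoidHom.mrange SignType.castHom.toMonoidHom
  have hneg : (-1 : ℚ) ∈ MonoidHom.mrange SignType.castHom.toMonoidHom := ⟨-1, by simp⟩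
  refine mul_mem (mul_mem (pow_mem hneg _) ?_) hm
  rcases hs with rfl | rfl
  · exact ⟨1, by simp⟩
  · exact ⟨-1, by simp⟩

/-- A matrix over `ℚ` each of whose columns has exactly one `1`, exactly one `-1`,
and zeros elsewhere, is totally unimodular. -/
private lemma isTotallyUnimodular_of_columns_pm {m n : Type*} (A : Matrix m n ℚ)
    (h : ∀ j : n, ∃ i₁ i₂ : m, i₁ ≠ i₂ ∧ A i₁ j = 1 ∧ A i₂ j = -1 ∧
      ∀ i : m, i ≠ i₁ → i ≠ i₂ → A i j = 0) :
    A.IsTotallyUnimodular := by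
  intro k
  induction k with
  | zero => intro f g _ _; exact ⟨1, by simp⟩
  | succ k ih =>
    intro f g hf hg
    choose i₁ i₂ hne h1 h2 h0 using fun x : Fin (k+1) => h (g x)
    by_cases hall : ∀ x : Fin (k+1), (∃ y, f y = i₁ x) ∧ (∃ y, f y = i₂ x)
    · refine ⟨0, ?_⟩
      symm
      rw [SignType.coe_zero, ← Matrix.exists_vecMul_eq_zero_iff]
      refine ⟨fun _ => 1, fun h' => by simpa using congrFun h' 0, ?_⟩
      funext x
      obtain ⟨⟨y₁, hy₁⟩, ⟨y₂, hy₂⟩⟩ := hall x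
      have hyy : y₁ ≠ y₂ := by rintro rfl; exact hne x (hy₁.symm.trans hy₂)
      have key : ∀ i, A (f i) (g x) =
          (if i = y₁ then (1:ℚ) else 0) + (if i = y₂ then -1 else 0) := by
        intro i
        by_cases e1 : i = y₁
        · subst e1; rw [if_pos rfl, if_neg hyy, hy₁, h1, add_zero]
        · by_cases e2 : i = y₂
          · subst e2; rw [if_neg e1, if_pos rfl, hy₂, h2, zero_add]
          · rw [if_neg e1, if_neg e2, add_zero,
              h0 x _ (fun e => e1 (hf (e.trans hy₁.symm)))
              (fun e => e2 (hf (e.trans hy₂.symm)))]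
      simp [Matrix.vecMul, dotProduct, key, Finset.sum_add_distrib, hyy]
    · push_neg at hall
      obtain ⟨x, hx⟩ := hall
      by_cases hp : ∃ y, f y = i₁ x
      · obtain ⟨y, hy⟩ := hp
        refine det_mem_range_of_single_col x y 1 (Or.inl rfl) (by simp [Matrix.submatrix, hy, h1])
          (fun i hi => ?_) ?_
        · exact h0 x _ (fun e => hi (hf (e.trans hy.symm)))
            (fun e => hx ⟨y, hy⟩ i e)
        · rw [Matrix.submatrix_submatrix]
          exact ih _ _ (hf.comp (Fin.succAbove_right_injective))
            (hg.comp (Fin.succAbove_right_injective))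
      · by_cases hq : ∃ y, f y = i₂ x
        · obtain ⟨y, hy⟩ := hq
          refine det_mem_range_of_single_col x y (-1) (Or.inr rfl)
            (by simp [Matrix.submatrix, hy, h2]) (fun i hi => ?_) ?_
          · exact h0 x _ (fun e => hp ⟨i, e⟩) (fun e => hi (hf (e.trans hy.symm)))
          · rw [Matrix.submatrix_submatrix]
            exact ih _ _ (hf.comp (Fin.succAbove_right_injective))
              (hg.comp (Fin.succAbove_right_injective))
        · refine ⟨0, ?_⟩
          symm
          rw [SignType.coe_zero]
          apply Matrix.det_eq_zero_of_column_eq_zero x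
          intro i
          exact h0 x _ (fun e => hp ⟨i, e⟩) (fun e => hq ⟨i, e⟩)

/-- Proposition 3.1: the constraint matrix of the LP relaxation of the power-plant profit
maximization problem is totally unimodular. Variables (columns) are ordered as
`W²(1),…,W²(n)`, `W⁶(1),…,W⁶(n)`, `W⁴(2),…,W⁴(n)`. Rows are: (i) for `j = 2,…,n` the
constraint `W²(j) − W²(j−1) − W⁴(j) ≤ 0`; (ii) for `j = 1,…,n` the constraint
`W⁶(j) − W²(j) ≤ 0`; (iii) the bound rows `x ≤ 1` (identity) and `−x ≤ 0` (negated
identity) for each of the `3n − 1` variables. -/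
theorem constraint_matrix_isTotallyUnimodular (n : ℕ) (hn : 2 ≤ n) :
    (Matrix.of fun
        (r : (Fin (n - 1) ⊕ Fin n) ⊕
          ((Fin n ⊕ Fin n ⊕ Fin (n - 1)) ⊕ (Fin n ⊕ Fin n ⊕ Fin (n - 1))))
        (c : Fin n ⊕ Fin n ⊕ Fin (n - 1)) =>
      match r, c with
      -- (C1), row j (for time j+1): `W²(j+1) − W²(j) − W⁴(j+1) ≤ 0` (0-based indexing)
      | Sum.inl (Sum.inl j), Sum.inl k =>
          if (k : ℕ) = (j : ℕ) + 1 then (1 : ℚ) else if (k : ℕ) = (j : ℕ) then -1 else 0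
      | Sum.inl (Sum.inl _), Sum.inr (Sum.inl _) => 0
      | Sum.inl (Sum.inl j), Sum.inr (Sum.inr k) => if k = j then -1 else 0
      -- (C2), row j: `W⁶(j) − W²(j) ≤ 0`
      | Sum.inl (Sum.inr j), Sum.inl k => if k = j then -1 else 0
      | Sum.inl (Sum.inr j), Sum.inr (Sum.inl k) => if k = j then 1 else 0
      | Sum.inl (Sum.inr _), Sum.inr (Sum.inr _) => 0
      -- (C3): bound rows `x ≤ 1` (identity rows) and `−x ≤ 0` (negated identity rows)
      | Sum.inr (Sum.inl c'), c => if c = c' then 1 else 0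
      | Sum.inr (Sum.inr c'), c => if c = c' then -1 else 0).IsTotallyUnimodular := by
  classical
  -- the transposed C1/C2 block, with W⁴ columns split off
  set C : Matrix (Fin n ⊕ Fin n) (Fin (n-1) ⊕ Fin n) ℚ := Matrix.of fun i r =>
    match i, r with
    | Sum.inl k, Sum.inl j =>
        if (k : ℕ) = (j : ℕ) + 1 then (1 : ℚ) else if (k : ℕ) = (j : ℕ) then -1 else 0
    | Sum.inl k, Sum.inr j => if k = j then -1 else 0
    | Sum.inr _, Sum.inl _ => 0
    | Sum.inr k, Sum.inr j => if k = j then 1 else 0 with hCdef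
  have hC : C.IsTotallyUnimodular := by
    apply isTotallyUnimodular_of_columns_pm
    rintro (j | j)
    · refine ⟨Sum.inl ⟨(j : ℕ) + 1, by have := j.isLt; omega⟩,
        Sum.inl ⟨(j : ℕ), by have := j.isLt; omega⟩, ?_, ?_, ?_, ?_⟩
      · simp [Fin.ext_iff]
      · simp [hCdef]
      · simp [hCdef]
      · rintro (k | k) hk1 hk2
        · have e1 : (k : ℕ) ≠ (j : ℕ) + 1 := fun e => hk1 (by exact congrArg Sum.inl (Fin.ext e))
          have e2 : (k : ℕ) ≠ (j : ℕ) := fun e => hk2 (by exact congrArg Sum.inl (Fin.ext e))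
          simp [hCdef, e1, e2]
        · simp [hCdef]
    · refine ⟨Sum.inr j, Sum.inl j, by simp, by simp [hCdef], by simp [hCdef], ?_⟩
      rintro (k | k) hk1 hk2
      · have e : k ≠ j := fun e => hk2 (congrArg Sum.inl e)
        simp [hCdef, e]
      · have e : k ≠ j := fun e => hk1 (congrArg Sum.inr e)
        simp [hCdef, e]
  set D : Matrix (Fin (n-1)) (Fin (n-1) ⊕ Fin n) ℚ :=
    Matrix.of fun i r => if r = Sum.inl i then -1 else 0 with hDdef
  have hCD : (Matrix.fromRows C D).IsTotallyUnimodular := by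
    rw [Matrix.fromRows_isTotallyUnimodular_iff_rows]
    · exact hC
    · intro _ i
      exact ⟨Sum.inl i, SignType.neg, funext fun r => by simp [hDdef, Pi.single_apply]⟩
  -- the C1/C2 block itself
  set A₀ : Matrix (Fin (n-1) ⊕ Fin n) (Fin n ⊕ Fin n ⊕ Fin (n-1)) ℚ := Matrix.of fun r c =>
    match r, c with
    | Sum.inl j, Sum.inl k =>
        if (k : ℕ) = (j : ℕ) + 1 then (1 : ℚ) else if (k : ℕ) = (j : ℕ) then -1 else 0
    | Sum.inl _, Sum.inr (Sum.inl _) => 0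
    | Sum.inl j, Sum.inr (Sum.inr k) => if k = j then -1 else 0
    | Sum.inr j, Sum.inl k => if k = j then -1 else 0
    | Sum.inr j, Sum.inr (Sum.inl k) => if k = j then 1 else 0
    | Sum.inr _, Sum.inr (Sum.inr _) => 0 with hA₀def
  have hA₀ : A₀.IsTotallyUnimodular := by
    have h := ((hCD.submatrix
      (fun c : Fin n ⊕ Fin n ⊕ Fin (n-1) => (Equiv.sumAssoc (Fin n) (Fin n) (Fin (n-1))).symm c)
      id)).transpose
    have he : A₀ = ((Matrix.fromRows C D).submatrix
        (fun c : Fin n ⊕ Fin n ⊕ Fin (n-1) => (Equiv.sumAssoc (Fin n) (Fin n) (Fin (n-1))).symm c)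
        id).transpose := by
      ext r c
      rcases r with j | j <;> rcases c with k | k | k <;>
        simp [hA₀def, hCdef, hDdef, Equiv.sumAssoc, Matrix.fromRows_apply_inl, Matrix.fromRows_apply_inr, eq_comm]
    rw [he]
    exact h
  -- bound rows
  set B : Matrix ((Fin n ⊕ Fin n ⊕ Fin (n-1)) ⊕ (Fin n ⊕ Fin n ⊕ Fin (n-1)))
      (Fin n ⊕ Fin n ⊕ Fin (n-1)) ℚ := Matrix.of fun r c =>
    match r with
    | Sum.inl c' => if c = c' then (1 : ℚ) else 0
    | Sum.inr c' => if c = c' then -1 else 0 with hBdef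
  have hM : (Matrix.fromRows A₀ B).IsTotallyUnimodular := by
    rw [Matrix.fromRows_isTotallyUnimodular_iff_rows]
    · exact hA₀
    · rintro _ (c' | c')
      · exact ⟨c', SignType.pos, funext fun c => by simp [hBdef, Pi.single_apply]⟩
      · exact ⟨c', SignType.neg, funext fun c => by simp [hBdef, Pi.single_apply]⟩
  have heq : (Matrix.of fun
        (r : (Fin (n - 1) ⊕ Fin n) ⊕
          ((Fin n ⊕ Fin n ⊕ Fin (n - 1)) ⊕ (Fin n ⊕ Fin n ⊕ Fin (n - 1))))
        (c : Fin n ⊕ Fin n ⊕ Fin (n - 1)) =>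
      match r, c with
      | Sum.inl (Sum.inl j), Sum.inl k =>
          if (k : ℕ) = (j : ℕ) + 1 then (1 : ℚ) else if (k : ℕ) = (j : ℕ) then -1 else 0
      | Sum.inl (Sum.inl _), Sum.inr (Sum.inl _) => 0
      | Sum.inl (Sum.inl j), Sum.inr (Sum.inr k) => if k = j then -1 else 0
      | Sum.inl (Sum.inr j), Sum.inl k => if k = j then -1 else 0
      | Sum.inl (Sum.inr j), Sum.inr (Sum.inl k) => if k = j then 1 else 0
      | Sum.inl (Sum.inr _), Sum.inr (Sum.inr _) => 0
      | Sum.inr (Sum.inl c'), c => if c = c' then 1 else 0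
      | Sum.inr (Sum.inr c'), c => if c = c' then -1 else 0) = Matrix.fromRows A₀ B := by
    ext r c
    rcases r with (j | j) | (r' | r') <;> rcases c with k | k | k <;>
      simp [hA₀def, hBdef, Matrix.fromRows_apply_inl, Matrix.fromRows_apply_inr]
  rw [heq]
  exact hM
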